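/- Let G be a torsion-free abelian group of rank 1 (i.e., G embeds into ℚ). Then every G-graded division ring F over a field k with k = F_0 central in F is commutative. -/

import Mathlib

section Aux

variable {G : Type*} [AddCommGroup G] [DecidableEq G]
  {F : Type*} [Ring F] (𝒜 : G → AddSubgroup F) [GradedRing 𝒜]

private lemma aux_inv_mem {g : G} (u : Fˣ) (hu : (u : F) ∈ 𝒜 g) :
    ((u⁻¹ : Fˣ) : F) ∈ 𝒜 (-g) := by
  have h1 : (DirectSum.decompose 𝒜 ((u : F) * ((u⁻¹ : Fˣ) : F)) (g + -g) : F)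
      = (u : F) * (DirectSum.decompose 𝒜 ((u⁻¹ : Fˣ) : F) (-g) : F) :=
    DirectSum.coe_decompose_mul_add_of_left_mem 𝒜 hu
  rw [Units.mul_inv, add_neg_cancel,
    DirectSum.decompose_of_mem_same 𝒜 (SetLike.one_mem_graded 𝒜)] at h1
  have h2 : ((u⁻¹ : Fˣ) : F) = (DirectSum.decompose 𝒜 ((u⁻¹ : Fˣ) : F) (-g) : F) :=
    Units.inv_eq_of_mul_eq_one_right h1.symm
  rw [h2]
  exact (DirectSum.decompose 𝒜 ((u⁻¹ : Fˣ) : F) (-g)).2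

private lemma aux_zpow_mem {w : G} (u : Fˣ) (hu : (u : F) ∈ 𝒜 w) (k : ℤ) :
    ((u ^ k : Fˣ) : F) ∈ 𝒜 (k • w) := by
  have hnat : ∀ n : ℕ, ((u ^ (n : ℤ) : Fˣ) : F) ∈ 𝒜 ((n : ℤ) • w) := by
    intro n
    rw [zpow_natCast, natCast_zsmul, Units.val_pow_eq_pow_val]
    exact SetLike.pow_mem_graded n hu
  obtain ⟨n, rfl | rfl⟩ := k.eq_nat_or_neg
  · exact hnat n
  · rw [zpow_neg, neg_zsmul]
    exact aux_inv_mem 𝒜 _ (hnat n)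

end Aux

/-- Let `G` be a torsion-free abelian group of rank 1 (i.e. `G` embeds into
`ℚ`), and let `F` be a `G`-graded division ring over a field `k = F₀` contained
in the center of `F`, supported on all of `G`.  Then `F` is commutative. -/
theorem graded_division_ring_rank_one_commutative
    (G : Type*) [AddCommGroup G] [DecidableEq G]
    (φ : G →+ ℚ) (hφ : Function.Injective φ)
    (F : Type*) [Ring F] [Nontrivial F]
    (𝒜 : G → AddSubgroup F) [GradedRing 𝒜]
    (hcentral : ∀ x ∈ 𝒜 (0 : G), ∀ y : F, x * y = y * x)
    (hdiv : ∀ x : F, x ≠ 0 → SetLike.IsHomogeneousElem 𝒜 x → IsUnit x)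
    (hsupp : ∀ g : G, 𝒜 g ≠ ⊥) :
    ∀ x y : F, x * y = y * x := by
  -- Step 1: reduce to homogeneous elements
  have Hhom : ∀ (g h : G) (x y : F), x ∈ 𝒜 g → y ∈ 𝒜 h → x * y = y * x := by
    intro g h x y hx hy
    by_cases hx0 : x = 0; · simp [hx0]
    by_cases hy0 : y = 0; · simp [hy0]
    by_cases hg : g = 0
    · exact hcentral x (hg ▸ hx) y
    by_cases hh : h = 0
    · exact (hcentral y (hh ▸ hy) x).symm
    -- rational bookkeeping
    set a : ℚ := φ g with ha
    set b : ℚ := φ h with hb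
    have ha0 : a ≠ 0 := fun h0 => hg (hφ (by rw [map_zero]; exact h0))
    have hb0 : b ≠ 0 := fun h0 => hh (hφ (by rw [map_zero]; exact h0))
    set m : ℤ := a.num * b.den with hm
    set n : ℤ := b.num * a.den with hn
    have hden_a : ((a.den : ℚ)) ≠ 0 := by exact_mod_cast a.den_ne_zero
    have hden_b : ((b.den : ℚ)) ≠ 0 := by exact_mod_cast b.den_ne_zero
    set N : ℚ := (a.den : ℚ) * (b.den : ℚ) with hN
    have hN0 : N ≠ 0 := mul_ne_zero hden_a hden_b
    have hma : (m : ℚ) = a * N := by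
      rw [hm, hN]; push_cast
      rw [show ((a.num : ℚ)) = a * a.den from (Rat.mul_den_eq_num a).symm]
      ring
    have hnb : (n : ℚ) = b * N := by
      rw [hn, hN]; push_cast
      rw [show ((b.num : ℚ)) = b * b.den from (Rat.mul_den_eq_num b).symm]
      ring
    have hm0 : m ≠ 0 := by
      rw [hm]
      exact mul_ne_zero (Rat.num_ne_zero.mpr ha0) (by exact_mod_cast b.den_ne_zero)
    have hd0 : (Int.gcd m n : ℤ) ≠ 0 := by
      simp only [ne_eq, Int.natCast_eq_zero, Int.gcd_eq_zero_iff, not_and]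
      intro h0; exact absurd h0 hm0
    set A : ℤ := Int.gcdA m n with hA
    set B : ℤ := Int.gcdB m n with hB
    set w : G := A • g + B • h with hw
    have hφw : φ w = (A : ℚ) * a + (B : ℚ) * b := by
      rw [hw, map_add, map_zsmul, map_zsmul, zsmul_eq_mul, zsmul_eq_mul, ha, hb]
    set a' : ℤ := m / (Int.gcd m n : ℤ) with ha'
    set b' : ℤ := n / (Int.gcd m n : ℤ) with hb'
    have hZa : a' * (m * A + n * B) = m := by
      rw [← Int.gcd_eq_gcd_ab, ha']
      exact Int.ediv_mul_cancel (Int.gcd_dvd_left m n)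
    have hZb : b' * (m * A + n * B) = n := by
      rw [← Int.gcd_eq_gcd_ab, hb']
      exact Int.ediv_mul_cancel (Int.gcd_dvd_right m n)
    have hga : a' • w = g := by
      apply hφ
      rw [map_zsmul, hφw, zsmul_eq_mul]
      have hq := congrArg (fun z : ℤ => (z : ℚ)) hZa
      push_cast at hq
      rw [hma, hnb] at hq
      apply mul_right_cancel₀ hN0
      linear_combination hq
    have hhb : b' • w = h := by
      apply hφ
      rw [map_zsmul, hφw, zsmul_eq_mul]
      have hq := congrArg (fun z : ℤ => (z : ℚ)) hZb
      push_cast at hq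
      rw [hma, hnb] at hq
      apply mul_right_cancel₀ hN0
      linear_combination hq
    -- pick a nonzero homogeneous element of degree w
    have hz : ∃ z ∈ 𝒜 w, z ≠ 0 := by
      by_contra hc
      push_neg at hc
      exact hsupp w ((AddSubgroup.eq_bot_iff_forall _).mpr hc)
    obtain ⟨z, hzmem, hz0⟩ := hz
    obtain ⟨uz, huz⟩ := hdiv z hz0 ⟨w, hzmem⟩
    have huzmem : (uz : F) ∈ 𝒜 w := huz ▸ hzmem
    -- express x and y as central multiples of powers of uz
    set za : F := ((uz ^ a' : Fˣ) : F) with hza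
    set zb : F := ((uz ^ b' : Fˣ) : F) with hzb
    have hza_mem : za ∈ 𝒜 g := hga ▸ aux_zpow_mem 𝒜 uz huzmem a'
    have hzb_mem : zb ∈ 𝒜 h := hhb ▸ aux_zpow_mem 𝒜 uz huzmem b'
    set μ : F := x * (((uz ^ a')⁻¹ : Fˣ) : F) with hμdef
    set ν : F := y * (((uz ^ b')⁻¹ : Fˣ) : F) with hνdef
    have hμmem : μ ∈ 𝒜 0 := by
      have h1 : (((uz ^ a')⁻¹ : Fˣ) : F) ∈ 𝒜 (-(a' • w)) :=
        aux_inv_mem 𝒜 _ (aux_zpow_mem 𝒜 uz huzmem a')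
      have := SetLike.mul_mem_graded hx (hga ▸ h1)
      rwa [add_neg_cancel] at this
    have hνmem : ν ∈ 𝒜 0 := by
      have h1 : (((uz ^ b')⁻¹ : Fˣ) : F) ∈ 𝒜 (-(b' • w)) :=
        aux_inv_mem 𝒜 _ (aux_zpow_mem 𝒜 uz huzmem b')
      have := SetLike.mul_mem_graded hy (hhb ▸ h1)
      rwa [add_neg_cancel] at this
    have hxμ : x = μ * za := by
      rw [hμdef, hza, mul_assoc, Units.inv_mul, mul_one]
    have hyν : y = ν * zb := by
      rw [hνdef, hzb, mul_assoc, Units.inv_mul, mul_one]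
    have czz : Commute za zb := by
      rw [hza, hzb]
      unfold Commute SemiconjBy
      rw [← Units.val_mul, ← Units.val_mul, ← zpow_add, ← zpow_add, add_comm]
    have cμ : ∀ c : F, Commute μ c := fun c => hcentral μ hμmem c
    have cν : ∀ c : F, Commute ν c := fun c => hcentral ν hνmem c
    rw [hxμ, hyν]
    exact (cμ (ν * zb)).mul_left ((cν za).symm.mul_right czz)
  intro x y
  refine DirectSum.Decomposition.inductionOn 𝒜 (motive := fun x => ∀ y : F, x * y = y * x) (by simp)
    ?_ ?_ x y
  · rintro i ⟨xi, hxi⟩ y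
    refine DirectSum.Decomposition.inductionOn 𝒜 (motive := fun y => xi * y = y * xi) (by simp)
      ?_ ?_ y
    · rintro j ⟨yj, hyj⟩
      exact Hhom i j xi yj hxi hyj
    · intro u v hu hv
      rw [mul_add, add_mul, hu, hv]
  · intro u v hu hv y
    rw [add_mul, mul_add, hu, hv]
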